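/- Let D = [[19,−4],[24,−5]] and P_{3/5} = [[1, 3/5],[0,1]]. Then the matrix D⁻¹P_{3/5} = [[−5, 1],[−24, 23/5]] lies in SL(2,ℝ) and is an elliptic matrix of infinite order. -/

import Mathlib

open Matrix MatrixGroups UpperHalfPlane

noncomputable def Emat : Matrix (Fin 2) (Fin 2) ℝ := !![-5, 1; -24, 23/5]

lemma Emat_det : Emat.det = 1 := by
  simp [Emat, Matrix.det_fin_two_of]; norm_num

noncomputable def Esl : SL(2, ℝ) := ⟨Emat, Emat_det⟩

lemma zmod_pow (n : ℕ) : ((!![0,0;0,3] : Matrix (Fin 2) (Fin 2) (ZMod 5)) ^ n) 1 1 = 3 ^ n := by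
  induction n with
  | zero => simp
  | succ k ih =>
    rw [pow_succ, Matrix.mul_apply, Fin.sum_univ_two, ih]
    norm_num [pow_succ]

lemma inf_order (n : ℕ) (hn : 0 < n) : Esl ^ n ≠ 1 := by
  intro h
  have h1 : (Emat) ^ n = 1 := by
    have := congrArg (fun g : SL(2,ℝ) => (g : Matrix (Fin 2) (Fin 2) ℝ)) h
    simp only [Matrix.SpecialLinearGroup.coe_pow, Matrix.SpecialLinearGroup.coe_one] at this
    simpa [Esl] using this
  set M : Matrix (Fin 2) (Fin 2) ℤ := !![-25,5;-120,23] with hM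
  have hmap : M.map ⇑(Int.castRingHom ℝ) = (5:ℝ) • Emat := by
    ext i j
    fin_cases i <;> fin_cases j <;> simp [M, Emat] <;> norm_num
  have hpowR : (M ^ n).map ⇑(Int.castRingHom ℝ) = (5:ℝ)^n • 1 := by
    rw [← RingHom.mapMatrix_apply, map_pow, RingHom.mapMatrix_apply, hmap, smul_pow, h1]
  have hentry : (((M ^ n) 1 1 : ℤ) : ℝ) = (5:ℝ)^n := by
    have := congrFun (congrFun hpowR 1) 1
    simpa [Matrix.map_apply, Matrix.smul_apply, Matrix.one_apply] using this
  have hZ : (M ^ n) 1 1 = 5 ^ n := by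
    have : (((M ^ n) 1 1 : ℤ) : ℝ) = (((5:ℤ)^n : ℤ) : ℝ) := by push_cast; exact hentry
    exact_mod_cast this
  have hmod : (((M ^ n) 1 1 : ℤ) : ZMod 5) = 0 := by
    rw [hZ]; push_cast
    simp [show ((5:ZMod 5)) = 0 from rfl, zero_pow hn.ne']
  have h5 : M.map ⇑(Int.castRingHom (ZMod 5)) = !![0,0;0,3] := by
    ext i j
    fin_cases i <;> fin_cases j <;> simp [M] <;> decide
  have h6 : ((M ^ n).map ⇑(Int.castRingHom (ZMod 5))) 1 1 = 3 ^ n := by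
    rw [← RingHom.mapMatrix_apply, map_pow, RingHom.mapMatrix_apply, h5, zmod_pow]
  have h7 : (3 : ZMod 5) ^ n = 0 := by
    rw [← h6]; simpa [Matrix.map_apply] using hmod
  have h8 : (1 : ZMod 5) = 0 := by
    have h9 : ((3:ZMod 5)*2)^n = 0 := by rw [mul_pow, h7, zero_mul]
    simpa [show ((3:ZMod 5)*2) = 1 by decide] using h9
  exact absurd h8 (by decide)

noncomputable def zc : ℂ := (1/5 : ℂ) + ((Real.sqrt 6 : ℝ) : ℂ)/60 * Complex.I

lemma zc_im : zc.im = Real.sqrt 6 / 60 := by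
  simp [zc]

lemma zc_im_pos : 0 < zc.im := by
  rw [zc_im]
  positivity

noncomputable def z₀ : ℍ := UpperHalfPlane.mk zc zc_im_pos

lemma sqrt6_sq : ((Real.sqrt 6 : ℝ) : ℂ)^2 = 6 := by
  have : (Real.sqrt 6)^2 = 6 := Real.sq_sqrt (by norm_num)
  exact_mod_cast this

lemma denom_ne (z : ℍ) : ((-24:ℂ) * z + 23/5) ≠ 0 := by
  intro h
  have him := congrArg Complex.im h
  simp [Complex.add_im, Complex.mul_im] at him
  exact absurd him (ne_of_gt z.im_pos)

lemma smul_coe (z : ℍ) : (↑(Esl • z) : ℂ) = ((-5:ℂ) * z + 1) / ((-24:ℂ) * z + 23/5) := by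
  rw [specialLinearGroup_apply]
  norm_num [Esl, Emat, Algebra.algebraMap_self_apply]

lemma fixed_iff (z : ℍ) : Esl • z = z ↔ (24:ℂ)*(z:ℂ)^2 - 48/5*(z:ℂ) + 1 = 0 := by
  rw [UpperHalfPlane.ext_iff, smul_coe, div_eq_iff (denom_ne z)]
  constructor <;> intro h <;> linear_combination h

lemma exists_unique_fixed : ∃! z : ℍ, Esl • z = z := by
  refine ⟨z₀, ?_, ?_⟩
  · show Esl • z₀ = z₀
    rw [fixed_iff]
    show (24:ℂ)*zc^2 - 48/5*zc + 1 = 0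
    rw [zc]
    linear_combination (((Real.sqrt 6:ℝ):ℂ)^2/150) * Complex.I_sq - (1/150) * sqrt6_sq
  · intro y hy
    rw [fixed_iff] at hy
    have key : ((y:ℂ) - zc) * ((y:ℂ) - ((1/5 : ℂ) - ((Real.sqrt 6 : ℝ) : ℂ)/60 * Complex.I)) = 0 := by
      rw [zc]
      linear_combination (1/24)*hy - (((Real.sqrt 6:ℝ):ℂ)^2/3600)*Complex.I_sq + (1/3600)*sqrt6_sq
    rcases mul_eq_zero.mp key with h | h
    · exact UpperHalfPlane.ext (sub_eq_zero.mp h)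
    · exfalso
      have h2 : (y:ℂ) = (1/5 : ℂ) - ((Real.sqrt 6 : ℝ) : ℂ)/60 * Complex.I := sub_eq_zero.mp h
      have h3 := congrArg Complex.im h2
      simp [UpperHalfPlane.coe_im] at h3
      have := y.im_pos
      rw [h3] at this
      have h6 : 0 < Real.sqrt 6 := Real.sqrt_pos.mpr (by norm_num)
      nlinarith

theorem D_inv_P_elliptic_infinite_order :
    (!![19, -4; 24, -5] : Matrix (Fin 2) (Fin 2) ℝ)⁻¹ * !![1, 3/5; 0, 1] =
      !![-5, 1; -24, 23/5] ∧
    (!![-5, 1; -24, 23/5] : Matrix (Fin 2) (Fin 2) ℝ).det = 1 ∧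
    ∃ E : SL(2, ℝ), (E : Matrix (Fin 2) (Fin 2) ℝ) = !![-5, 1; -24, 23/5] ∧
      (∃! z : ℍ, E • z = z) ∧
      (∀ n : ℕ, 0 < n → E ^ n ≠ 1) := by
  refine ⟨?_, Emat_det, Esl, rfl, exists_unique_fixed, inf_order⟩
  · haveI : Invertible (!![19, -4; 24, -5] : Matrix (Fin 2) (Fin 2) ℝ) :=
      Matrix.invertibleOfIsUnitDet _ (by simp [Matrix.det_fin_two_of]; norm_num)
    rw [Matrix.inv_mul_eq_iff_eq_mul_of_invertible]
    ext i j
    fin_cases i <;> fin_cases j <;>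
      simp [Matrix.mul_apply, Fin.sum_univ_two] <;> norm_num
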